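/- Let n ≥ 3 and ε ∈ (0,1), and consider the financial network with banks v_1,…,v_n, external assets e_{v_1} = 1 and all others 0, liabilities l_{v_i, v_{i+1}} = 1 for i = 1,…,n−1 and l_{v_1, v_n} = 1 (all others 0), default costs α = β = ε, and no cash injections. Then: (i) the maximal clearing payments of the full network are p_{v_1,v_2} = p_{v_1,v_n} = ε/2 and p_{v_i, v_{i+1}} = ε^i/2 for i = 2,…,n−1, so the systemic liquidity of the full network equals ε/2 + Σ_{i=1}^{n−1} ε^i/2, which is strictly less than ε/(1−ε); (ii) the strategy profile in which v_n removes the edge (v_1, v_n) and all other edges are kept is the unique pure Nash equilibrium of the edge-removal game, and its systemic liquidity is n−1. Consequently, the Effect of Stability of edge-removal games with default costs is less than ε/((1−ε)(n−1)), and hence can be made arbitrarily close to 0. -/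

import Mathlib

open Finset

/-- `p` is a proportional clearing payment matrix for the network with external assets `e`,
liabilities `l` and default costs `α, β`. -/
def IsClearing {ι : Type*} [Fintype ι] (α β : ℝ) (e : ι → ℝ) (l : ι → ι → ℝ)
    (p : ι → ι → ℝ) : Prop :=
  (∀ i j, 0 ≤ p i j) ∧ (∀ i j, p i j ≤ l i j) ∧
  (∀ i, (∑ j, l i j) ≤ e i + (∑ j, p j i) → ∀ j, p i j = l i j) ∧
  (∀ i, e i + (∑ j, p j i) < (∑ j, l i j) →
    ∀ j, p i j = (α * e i + β * (∑ k, p k i)) * l i j / (∑ k, l i k))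

/-- `p` is the maximal clearing payment matrix. -/
def IsMaxClearing {ι : Type*} [Fintype ι] (α β : ℝ) (e : ι → ℝ) (l p : ι → ι → ℝ) : Prop :=
  IsClearing α β e l p ∧ ∀ q, IsClearing α β e l q → ∀ i j, q i j ≤ p i j

/-- Systemic liquidity: the sum of all payments. -/
def liquidity {ι : Type*} [Fintype ι] (p : ι → ι → ℝ) : ℝ := ∑ i, ∑ j, p i j

/-- Total assets of bank `i` under payments `p`. -/
def assets {ι : Type*} [Fintype ι] (e : ι → ℝ) (p : ι → ι → ℝ) (i : ι) : ℝ :=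
  e i + ∑ j, p j i

/-- The liabilities obtained from `l` when each bank `j` removes the incoming edges from
the banks in `s j`. -/
def removeEdges {ι : Type*} [DecidableEq ι] (l : ι → ι → ℝ) (s : ι → Finset ι) :
    ι → ι → ℝ :=
  fun i j => if i ∈ s j then 0 else l i j

/-- `s` is a pure Nash equilibrium of the edge-removal game with payment rule `Pay`. -/
def NashEq {ι : Type*} [Fintype ι] [DecidableEq ι] (e : ι → ℝ)
    (Pay : (ι → Finset ι) → ι → ι → ℝ) (s : ι → Finset ι) : Prop :=
  ∀ (j : ι) (R : Finset ι),
    assets e (Pay (Function.update s j R)) j ≤ assets e (Pay s) j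

namespace EoS

noncomputable def lF (n : ℕ) : Fin n → Fin n → ℝ :=
  fun a b => if ((b : ℕ) = (a : ℕ) + 1) ∨ ((a : ℕ) = 0 ∧ (b : ℕ) = n - 1) then 1 else 0

noncomputable def eF (n : ℕ) : Fin n → ℝ := fun i => if (i : ℕ) = 0 then 1 else 0

noncomputable def lC (n : ℕ) : Fin n → Fin n → ℝ :=
  fun a b => if (b : ℕ) = (a : ℕ) + 1 then 1 else 0

variable {n : ℕ}

lemma fmk {a b : ℕ} (h : a < n) (h' : b < n) (hab : a = b) :
    (⟨a, h⟩ : Fin n) = ⟨b, h'⟩ := by subst hab; rfl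

lemma lF_nonneg (i j : Fin n) : 0 ≤ lF n i j := by
  unfold lF; split <;> norm_num

lemma lF_le_one (i j : Fin n) : lF n i j ≤ 1 := by
  unfold lF; split <;> norm_num

lemma re_le (s : Fin n → Finset (Fin n)) (i j : Fin n) :
    removeEdges (lF n) s i j ≤ lF n i j := by
  unfold removeEdges; split
  · exact lF_nonneg i j
  · exact le_refl _

lemma re_nonneg (s : Fin n → Finset (Fin n)) (i j : Fin n) :
    0 ≤ removeEdges (lF n) s i j := by
  unfold removeEdges; split
  · exact le_refl _
  · exact lF_nonneg i j

section Clearing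

variable {ε : ℝ} {s : Fin n → Finset (Fin n)} {q : Fin n → Fin n → ℝ}

lemma q_le_lF (hq : IsClearing ε ε (eF n) (removeEdges (lF n) s) q) (i j : Fin n) :
    q i j ≤ lF n i j := (hq.2.1 i j).trans (re_le s i j)

lemma q_zero (hq : IsClearing ε ε (eF n) (removeEdges (lF n) s) q)
    {i j : Fin n} (h : lF n i j = 0) : q i j = 0 :=
  le_antisymm (h ▸ q_le_lF hq i j) (hq.1 i j)

lemma q_zero' (hq : IsClearing ε ε (eF n) (removeEdges (lF n) s) q)
    {i j : Fin n} (h : ¬ (((j : ℕ) = (i : ℕ) + 1) ∨ ((i : ℕ) = 0 ∧ (j : ℕ) = n - 1))) :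
    q i j = 0 := q_zero hq (by unfold lF; rw [if_neg h])

lemma q_mem_zero (hq : IsClearing ε ε (eF n) (removeEdges (lF n) s) q)
    {i j : Fin n} (h : i ∈ s j) : q i j = 0 :=
  le_antisymm (by have := hq.2.1 i j; unfold removeEdges at this; rwa [if_pos h] at this)
    (hq.1 i j)

/-- incoming to bank 0 is 0 -/
lemma col_zero (hn : 3 ≤ n) (hq : IsClearing ε ε (eF n) (removeEdges (lF n) s) q)
    (h0 : (0:ℕ) < n) : ∑ i, q i ⟨0, h0⟩ = 0 := by
  apply Finset.sum_eq_zero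
  intro i _
  exact q_zero' hq (by simp; omega)

/-- incoming to bank a+1 (for a+1 ≤ n-2) comes only from bank a -/
lemma col_succ (hn : 3 ≤ n) (hq : IsClearing ε ε (eF n) (removeEdges (lF n) s) q)
    (a : ℕ) (h2 : a + 1 ≤ n - 2) (ha : a < n) (ha1 : a + 1 < n) :
    ∑ i, q i ⟨a + 1, ha1⟩ = q ⟨a, ha⟩ ⟨a + 1, ha1⟩ := by
  apply Fintype.sum_eq_single
  intro x hx
  have hxv : (x : ℕ) ≠ a := fun hv => hx (Fin.ext hv)
  exact q_zero' hq (by simp; omega)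

/-- incoming to bank n-1 comes only from banks 0 and n-2 -/
lemma col_last (hn : 3 ≤ n) (hq : IsClearing ε ε (eF n) (removeEdges (lF n) s) q)
    (h0 : (0:ℕ) < n) (h2 : n - 2 < n) (h1 : n - 1 < n) :
    ∑ i, q i ⟨n - 1, h1⟩ = q ⟨0, h0⟩ ⟨n - 1, h1⟩ + q ⟨n - 2, h2⟩ ⟨n - 1, h1⟩ := by
  apply Fintype.sum_eq_add
  · intro h; have := congrArg Fin.val h; simp at this; omega
  · intro x ⟨hx0, hx2⟩
    have hxv0 : (x : ℕ) ≠ 0 := fun hv => hx0 (Fin.ext hv)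
    have hxv2 : (x : ℕ) ≠ n - 2 := fun hv => hx2 (Fin.ext hv)
    have := x.isLt
    exact q_zero' hq (by simp; omega)

end Clearing
section Rows
variable {s : Fin n → Finset (Fin n)}

lemma re_eval (i j : Fin n) :
    removeEdges (lF n) s i j = if i ∈ s j then 0 else lF n i j := rfl

lemma lF_eval (i j : Fin n) :
    lF n i j = if ((j : ℕ) = (i : ℕ) + 1) ∨ ((i : ℕ) = 0 ∧ (j : ℕ) = n - 1) then 1 else 0 := rfl

lemma lF_zero {i j : Fin n}
    (h : ¬ (((j : ℕ) = (i : ℕ) + 1) ∨ ((i : ℕ) = 0 ∧ (j : ℕ) = n - 1))) :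
    lF n i j = 0 := by rw [lF_eval, if_neg h]

lemma lF_one {i j : Fin n}
    (h : ((j : ℕ) = (i : ℕ) + 1) ∨ ((i : ℕ) = 0 ∧ (j : ℕ) = n - 1)) :
    lF n i j = 1 := by rw [lF_eval, if_pos h]

lemma re_zero {i j : Fin n}
    (h : ¬ (((j : ℕ) = (i : ℕ) + 1) ∨ ((i : ℕ) = 0 ∧ (j : ℕ) = n - 1))) :
    removeEdges (lF n) s i j = 0 := by
  rw [re_eval, lF_zero h]; split <;> rfl

lemma re_mem {i j : Fin n} (h : i ∈ s j) : removeEdges (lF n) s i j = 0 := by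
  rw [re_eval, if_pos h]

lemma re_not_mem {i j : Fin n} (h : i ∉ s j) : removeEdges (lF n) s i j = lF n i j := by
  rw [re_eval, if_neg h]

lemma eF_zero (h0 : (0:ℕ) < n) : eF n ⟨0, h0⟩ = 1 := by simp [eF]

lemma eF_pos (a : ℕ) (h1 : 1 ≤ a) (ha : a < n) : eF n ⟨a, ha⟩ = 0 := by
  unfold eF; rw [if_neg]; simpa using by omega

/-- liabilities of bank 0 when the chord is kept -/
lemma rowL_zero (hn : 3 ≤ n) (h0 : (0:ℕ) < n) (hone : (1:ℕ) < n) (h1 : n - 1 < n)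
    (hs1 : (⟨0, h0⟩ : Fin n) ∉ s ⟨1, hone⟩) (hc : (⟨0, h0⟩ : Fin n) ∉ s ⟨n - 1, h1⟩) :
    ∑ b, removeEdges (lF n) s ⟨0, h0⟩ b = 2 := by
  rw [Fintype.sum_eq_add (⟨1, hone⟩ : Fin n) (⟨n - 1, h1⟩ : Fin n)
    (by intro h; have := congrArg Fin.val h; simp only [Fin.val_mk] at this; omega)
    (by
      intro x ⟨hx0, hx2⟩
      have hxv0 : (x : ℕ) ≠ 1 := fun hv => hx0 (Fin.ext hv)
      have hxv2 : (x : ℕ) ≠ n - 1 := fun hv => hx2 (Fin.ext hv)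
      exact re_zero (by simp only [Fin.val_mk]; omega))]
  rw [re_not_mem hs1, re_not_mem hc,
    lF_one (i := ⟨0, h0⟩) (j := ⟨1, hone⟩) (by simp),
    lF_one (i := ⟨0, h0⟩) (j := ⟨n - 1, h1⟩) (by simp)]
  norm_num

/-- liabilities of bank 0 when the chord is removed -/
lemma rowL_zero' (hn : 3 ≤ n) (h0 : (0:ℕ) < n) (hone : (1:ℕ) < n) (h1 : n - 1 < n)
    (hs1 : (⟨0, h0⟩ : Fin n) ∉ s ⟨1, hone⟩) (hc : (⟨0, h0⟩ : Fin n) ∈ s ⟨n - 1, h1⟩) :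
    ∑ b, removeEdges (lF n) s ⟨0, h0⟩ b = 1 := by
  rw [Fintype.sum_eq_add (⟨1, hone⟩ : Fin n) (⟨n - 1, h1⟩ : Fin n)
    (by intro h; have := congrArg Fin.val h; simp only [Fin.val_mk] at this; omega)
    (by
      intro x ⟨hx0, hx2⟩
      have hxv0 : (x : ℕ) ≠ 1 := fun hv => hx0 (Fin.ext hv)
      have hxv2 : (x : ℕ) ≠ n - 1 := fun hv => hx2 (Fin.ext hv)
      exact re_zero (by simp only [Fin.val_mk]; omega))]
  rw [re_not_mem hs1, re_mem hc,
    lF_one (i := ⟨0, h0⟩) (j := ⟨1, hone⟩) (by simp)]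
  norm_num

/-- liabilities of bank a for 1 ≤ a ≤ n-2 -/
lemma rowL_mid (hn : 3 ≤ n) (a : ℕ) (h1 : 1 ≤ a) (h2 : a ≤ n - 2)
    (ha : a < n) (ha1 : a + 1 < n) :
    ∑ b, removeEdges (lF n) s ⟨a, ha⟩ b
      = if (⟨a, ha⟩ : Fin n) ∈ s ⟨a + 1, ha1⟩ then 0 else 1 := by
  rw [Fintype.sum_eq_single (⟨a + 1, ha1⟩ : Fin n)
    (by
      intro x hx
      have hxv : (x : ℕ) ≠ a + 1 := fun hv => hx (Fin.ext hv)
      exact re_zero (by simp only [Fin.val_mk]; omega))]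
  by_cases hm : (⟨a, ha⟩ : Fin n) ∈ s ⟨a + 1, ha1⟩
  · rw [re_mem hm, if_pos hm]
  · rw [re_not_mem hm, if_neg hm,
      lF_one (i := ⟨a, ha⟩) (j := ⟨a + 1, ha1⟩) (by simp)]

/-- bank n-1 has no liabilities -/
lemma rowL_last (hn : 3 ≤ n) (h1 : n - 1 < n) :
    ∑ b, removeEdges (lF n) s ⟨n - 1, h1⟩ b = 0 := by
  apply Finset.sum_eq_zero
  intro b _
  have := b.isLt
  exact re_zero (by simp only [Fin.val_mk]; omega)

end Rows
section Forward
variable {ε : ℝ} {s : Fin n → Finset (Fin n)} {q : Fin n → Fin n → ℝ}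

/-- Payments of bank 0 when the chord is present. -/
lemma bank0 (hn : 3 ≤ n) (hε₀ : 0 < ε) (hε₁ : ε < 1)
    (h0 : (0:ℕ) < n) (hone : (1:ℕ) < n) (h1 : n - 1 < n)
    (hs1 : (⟨0, h0⟩ : Fin n) ∉ s ⟨1, hone⟩) (hc : (⟨0, h0⟩ : Fin n) ∉ s ⟨n - 1, h1⟩)
    (hq : IsClearing ε ε (eF n) (removeEdges (lF n) s) q) :
    q ⟨0, h0⟩ ⟨1, hone⟩ = ε / 2 ∧ q ⟨0, h0⟩ ⟨n - 1, h1⟩ = ε / 2 := by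
  have hin : ∑ i, q i ⟨0, h0⟩ = 0 := col_zero hn hq h0
  have hL : ∑ b, removeEdges (lF n) s ⟨0, h0⟩ b = 2 := rowL_zero hn h0 hone h1 hs1 hc
  have hdef := hq.2.2.2 ⟨0, h0⟩ (by rw [hin, hL, eF_zero]; norm_num)
  constructor
  · rw [hdef ⟨1, hone⟩, hin, hL, eF_zero, re_not_mem hs1,
      lF_one (i := ⟨0, h0⟩) (j := ⟨1, hone⟩) (by simp)]
    ring
  · rw [hdef ⟨n - 1, h1⟩, hin, hL, eF_zero, re_not_mem hc,
      lF_one (i := ⟨0, h0⟩) (j := ⟨n - 1, h1⟩) (by simp)]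
    ring

/-- One forward step: if bank b (1 ≤ b ≤ n-2) receives exactly ε^b/2, then it pays
ε^(b+1)/2 on its outgoing edge, unless that edge was removed. -/
lemma step_core (hn : 3 ≤ n) (hε₀ : 0 < ε) (hε₁ : ε < 1)
    (hq : IsClearing ε ε (eF n) (removeEdges (lF n) s) q)
    (b : ℕ) (h1 : 1 ≤ b) (h2 : b ≤ n - 2) (hb : b < n) (hb1 : b + 1 < n)
    (hin : ∑ i, q i ⟨b, hb⟩ = ε ^ b / 2) :
    q ⟨b, hb⟩ ⟨b + 1, hb1⟩
      = if (⟨b, hb⟩ : Fin n) ∈ s ⟨b + 1, hb1⟩ then 0 else ε ^ (b + 1) / 2 := by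
  have hL := rowL_mid (s := s) hn b h1 h2 hb hb1
  have he := eF_pos b h1 hb
  have hεb : ε ^ b < 1 := pow_lt_one₀ hε₀.le hε₁ (by omega)
  have hεb0 : 0 ≤ ε ^ b := pow_nonneg hε₀.le b
  by_cases hm : (⟨b, hb⟩ : Fin n) ∈ s ⟨b + 1, hb1⟩
  · rw [if_pos hm] at hL ⊢
    have hsolv := hq.2.2.1 ⟨b, hb⟩ (by rw [hL, he, hin]; positivity)
    rw [hsolv ⟨b + 1, hb1⟩, re_mem hm]
  · rw [if_neg hm] at hL ⊢
    have hdef := hq.2.2.2 ⟨b, hb⟩ (by rw [hL, he, hin]; linarith)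
    rw [hdef ⟨b + 1, hb1⟩, he, hin, hL, re_not_mem hm,
      lF_one (i := ⟨b, hb⟩) (j := ⟨b + 1, hb1⟩) (by simp)]
    rw [pow_succ]
    ring

/-- Exact payments along the chain when the chord is present and no middle bank
removes its incoming edge. -/
lemma bank_step (hn : 3 ≤ n) (hε₀ : 0 < ε) (hε₁ : ε < 1)
    (hs : ∀ (j : Fin n), (j : ℕ) ≠ n - 1 → s j = ∅)
    (h0 : (0:ℕ) < n) (h1 : n - 1 < n)
    (hc : (⟨0, h0⟩ : Fin n) ∉ s ⟨n - 1, h1⟩)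
    (hq : IsClearing ε ε (eF n) (removeEdges (lF n) s) q) :
    ∀ a : ℕ, a + 2 ≤ n - 1 → ∀ (ha : a + 1 < n) (ha1 : a + 2 < n),
      q ⟨a + 1, ha⟩ ⟨a + 2, ha1⟩
        = if (⟨a + 1, ha⟩ : Fin n) ∈ s ⟨a + 2, ha1⟩ then 0 else ε ^ (a + 2) / 2 := by
  intro a
  induction a with
  | zero =>
    intro hle ha ha1
    have hone : (1:ℕ) < n := by omega
    have hin : ∑ i, q i ⟨1, hone⟩ = ε ^ 1 / 2 := by
      rw [col_succ hn hq 0 (by omega) h0 hone,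
        (bank0 hn hε₀ hε₁ h0 hone h1 (by rw [hs ⟨1, hone⟩ (by simp; omega)]; simp) hc hq).1,
        pow_one]
    exact step_core hn hε₀ hε₁ hq 1 (by omega) (by omega) hone ha1 hin
  | succ a IH =>
    intro hle ha ha1
    have hb : a + 1 < n := by omega
    have hb2 : a + 2 ≤ n - 1 := by omega
    have hprev := IH hb2 hb ha
    rw [if_neg (by rw [hs ⟨a + 2, ha⟩ (by simp; omega)]; simp)] at hprev
    have hin : ∑ i, q i ⟨a + 2, ha⟩ = ε ^ (a + 2) / 2 := by
      rw [col_succ hn hq (a + 1) (by omega) hb ha, hprev]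
    exact step_core hn hε₀ hε₁ hq (a + 2) (by omega) (by omega) ha ha1 hin

end Forward
section Lower
variable {ε : ℝ} {s : Fin n → Finset (Fin n)} {q : Fin n → Fin n → ℝ}

/-- Lower bound on bank 0's payment to bank 1, as long as bank 1 keeps its edge. -/
lemma bank0_lb (hn : 3 ≤ n) (hε₀ : 0 < ε) (hε₁ : ε < 1)
    (h0 : (0:ℕ) < n) (hone : (1:ℕ) < n)
    (hs1 : (⟨0, h0⟩ : Fin n) ∉ s ⟨1, hone⟩)
    (hq : IsClearing ε ε (eF n) (removeEdges (lF n) s) q) :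
    ε / 2 ≤ q ⟨0, h0⟩ ⟨1, hone⟩ := by
  have h1 : n - 1 < n := by omega
  by_cases hc : (⟨0, h0⟩ : Fin n) ∈ s ⟨n - 1, h1⟩
  · -- chord removed: bank 0 is solvent and pays 1
    have hin : ∑ i, q i ⟨0, h0⟩ = 0 := col_zero hn hq h0
    have hL : ∑ b, removeEdges (lF n) s ⟨0, h0⟩ b = 1 := rowL_zero' hn h0 hone h1 hs1 hc
    have hsolv := hq.2.2.1 ⟨0, h0⟩ (by rw [hin, hL, eF_zero]; norm_num)
    rw [hsolv ⟨1, hone⟩, re_not_mem hs1,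
      lF_one (i := ⟨0, h0⟩) (j := ⟨1, hone⟩) (by simp)]
    linarith
  · rw [(bank0 hn hε₀ hε₁ h0 hone h1 hs1 hc hq).1]

/-- Lower bound on payments along the chain: if banks 1,…,m keep their incoming
edges then bank a pays at least ε^(a+1)/2 to bank a+1 for every a+1 ≤ m. -/
lemma chain_lb (hn : 3 ≤ n) (hε₀ : 0 < ε) (hε₁ : ε < 1)
    (m : ℕ) (hm : m ≤ n - 2)
    (hs : ∀ b : ℕ, 1 ≤ b → b ≤ m → ∀ (hb : b < n), s ⟨b, hb⟩ = ∅)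
    (hq : IsClearing ε ε (eF n) (removeEdges (lF n) s) q) :
    ∀ a : ℕ, a + 1 ≤ m → ∀ (ha : a < n) (ha1 : a + 1 < n),
      ε ^ (a + 1) / 2 ≤ q ⟨a, ha⟩ ⟨a + 1, ha1⟩ := by
  intro a
  induction a with
  | zero =>
    intro hle ha ha1
    rw [pow_one]
    exact bank0_lb hn hε₀ hε₁ ha ha1
      (by rw [hs 1 le_rfl hle ha1]; simp) hq
  | succ a IH =>
    intro hle ha ha1
    have hb : a < n := by omega
    have hprev := IH (by omega) hb ha
    have hεa : 0 ≤ ε ^ (a + 1) / 2 := by positivity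
    -- incoming to bank a+1 is at least q (a) (a+1)
    have hin : ε ^ (a + 1) / 2 ≤ ∑ i, q i ⟨a + 1, ha⟩ :=
      hprev.trans (Finset.single_le_sum (f := fun i => q i ⟨a + 1, ha⟩)
        (fun i _ => hq.1 i ⟨a + 1, ha⟩) (Finset.mem_univ (⟨a, hb⟩ : Fin n)))
    have hm' : (⟨a + 1, ha⟩ : Fin n) ∉ s ⟨a + 2, ha1⟩ := by
      rw [hs (a + 2) (by omega) hle ha1]; simp
    have hL : ∑ b, removeEdges (lF n) s ⟨a + 1, ha⟩ b = 1 := by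
      rw [rowL_mid hn (a + 1) (by omega) (by omega) ha ha1, if_neg hm']
    have he := eF_pos (a + 1) (by omega) ha
    have hl1 : removeEdges (lF n) s ⟨a + 1, ha⟩ ⟨a + 2, ha1⟩ = 1 := by
      rw [re_not_mem hm', lF_one (i := ⟨a + 1, ha⟩) (j := ⟨a + 2, ha1⟩) (by simp)]
    by_cases hsol : ∑ b, removeEdges (lF n) s ⟨a + 1, ha⟩ b
        ≤ eF n ⟨a + 1, ha⟩ + ∑ i, q i ⟨a + 1, ha⟩
    · rw [hq.2.2.1 ⟨a + 1, ha⟩ hsol ⟨a + 2, ha1⟩, hl1]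
      have : ε ^ (a + 2) < 1 := pow_lt_one₀ hε₀.le hε₁ (by omega)
      linarith
    · push_neg at hsol
      rw [hq.2.2.2 ⟨a + 1, ha⟩ hsol ⟨a + 2, ha1⟩, he, hL, hl1]
      have : ε * (ε ^ (a + 1) / 2) ≤ ε * ∑ i, q i ⟨a + 1, ha⟩ :=
        mul_le_mul_of_nonneg_left hin hε₀.le
      calc ε ^ (a + 1 + 1) / 2 = ε * (ε ^ (a + 1) / 2) := by rw [pow_succ]; ring
      _ ≤ ε * ∑ i, q i ⟨a + 1, ha⟩ := this
      _ = (ε * 0 + ε * ∑ i, q i ⟨a + 1, ha⟩) * 1 / 1 := by ring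
end Lower
section Full
variable {ε : ℝ} {s : Fin n → Finset (Fin n)} {q : Fin n → Fin n → ℝ}

noncomputable def pF (n : ℕ) (ε : ℝ) : Fin n → Fin n → ℝ := fun a b =>
  if (a : ℕ) = 0 ∧ ((b : ℕ) = 1 ∨ (b : ℕ) = n - 1) then ε / 2
  else if (b : ℕ) = (a : ℕ) + 1 ∧ 1 ≤ (a : ℕ) then ε ^ ((a : ℕ) + 1) / 2 else 0

lemma re_empty : removeEdges (lF n) (fun _ => (∅ : Finset (Fin n))) = lF n := by
  funext i j; rw [re_eval]; simp

lemma pF_zero (hn : 3 ≤ n) {i j : Fin n}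
    (h : ¬ (((j : ℕ) = (i : ℕ) + 1) ∨ ((i : ℕ) = 0 ∧ (j : ℕ) = n - 1))) :
    pF n ε i j = 0 := by
  unfold pF
  rw [if_neg (by push_neg at h ⊢; intro h0; constructor <;> omega),
    if_neg (by push_neg at h ⊢; intro h0; omega)]

lemma pF_nonneg (hn : 3 ≤ n) (hε₀ : 0 < ε) (i j : Fin n) : 0 ≤ pF n ε i j := by
  unfold pF; split
  · positivity
  · split
    · positivity
    · exact le_refl 0

lemma pF_01 (hn : 3 ≤ n) (h0 : (0:ℕ) < n) (hone : (1:ℕ) < n) :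
    pF n ε ⟨0, h0⟩ ⟨1, hone⟩ = ε / 2 := by
  unfold pF; rw [if_pos ⟨rfl, Or.inl rfl⟩]

lemma pF_0last (hn : 3 ≤ n) (h0 : (0:ℕ) < n) (h1 : n - 1 < n) :
    pF n ε ⟨0, h0⟩ ⟨n - 1, h1⟩ = ε / 2 := by
  unfold pF; rw [if_pos ⟨rfl, Or.inr rfl⟩]

lemma pF_mid (hn : 3 ≤ n) (a : ℕ) (h1 : 1 ≤ a) (h2 : a ≤ n - 2) (ha : a < n) (ha1 : a + 1 < n) :
    pF n ε ⟨a, ha⟩ ⟨a + 1, ha1⟩ = ε ^ (a + 1) / 2 := by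
  unfold pF
  rw [if_neg (by simp only [Fin.val_mk]; push_neg; intro h0; omega),
    if_pos ⟨rfl, h1⟩]

/-- generic column sums for matrices supported on the network edges -/
lemma colg_zero (hn : 3 ≤ n) {p : Fin n → Fin n → ℝ}
    (hz : ∀ i j : Fin n, ¬ (((j : ℕ) = (i : ℕ) + 1) ∨ ((i : ℕ) = 0 ∧ (j : ℕ) = n - 1)) →
      p i j = 0)
    (h0 : (0:ℕ) < n) : ∑ i, p i ⟨0, h0⟩ = 0 := by
  apply Finset.sum_eq_zero
  intro i _
  exact hz i _ (by simp; omega)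

lemma colg_succ (hn : 3 ≤ n) {p : Fin n → Fin n → ℝ}
    (hz : ∀ i j : Fin n, ¬ (((j : ℕ) = (i : ℕ) + 1) ∨ ((i : ℕ) = 0 ∧ (j : ℕ) = n - 1)) →
      p i j = 0)
    (a : ℕ) (h2 : a + 1 ≤ n - 2) (ha : a < n) (ha1 : a + 1 < n) :
    ∑ i, p i ⟨a + 1, ha1⟩ = p ⟨a, ha⟩ ⟨a + 1, ha1⟩ := by
  apply Fintype.sum_eq_single
  intro x hx
  have hxv : (x : ℕ) ≠ a := fun hv => hx (Fin.ext hv)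
  exact hz x _ (by simp; omega)

lemma colg_last (hn : 3 ≤ n) {p : Fin n → Fin n → ℝ}
    (hz : ∀ i j : Fin n, ¬ (((j : ℕ) = (i : ℕ) + 1) ∨ ((i : ℕ) = 0 ∧ (j : ℕ) = n - 1)) →
      p i j = 0)
    (h0 : (0:ℕ) < n) (h2 : n - 2 < n) (h1 : n - 1 < n) :
    ∑ i, p i ⟨n - 1, h1⟩ = p ⟨0, h0⟩ ⟨n - 1, h1⟩ + p ⟨n - 2, h2⟩ ⟨n - 1, h1⟩ := by
  apply Fintype.sum_eq_add
  · intro h; have := congrArg Fin.val h; simp only [Fin.val_mk] at this; omega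
  · intro x ⟨hx0, hx2⟩
    have hxv0 : (x : ℕ) ≠ 0 := fun hv => hx0 (Fin.ext hv)
    have hxv2 : (x : ℕ) ≠ n - 2 := fun hv => hx2 (Fin.ext hv)
    have := x.isLt
    exact hz x _ (by simp; omega)

/-- pF is a clearing matrix for the full network -/
lemma pF_clearing (hn : 3 ≤ n) (hε₀ : 0 < ε) (hε₁ : ε < 1) :
    IsClearing ε ε (eF n) (lF n) (pF n ε) := by
  have h0 : (0:ℕ) < n := by omega
  have hone : (1:ℕ) < n := by omega
  have h2n : n - 2 < n := by omega
  have h1n : n - 1 < n := by omega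
  have hz : ∀ i j : Fin n, ¬ (((j : ℕ) = (i : ℕ) + 1) ∨ ((i : ℕ) = 0 ∧ (j : ℕ) = n - 1)) →
      pF n ε i j = 0 := fun i j h => pF_zero hn h
  -- rewrite the full network row sums via the empty strategy
  have hrow0 : ∑ b, lF n ⟨0, h0⟩ b = 2 := by
    rw [← re_empty (n := n)]; exact rowL_zero hn h0 hone h1n (by simp) (by simp)
  have hrowmid : ∀ a (h1 : 1 ≤ a) (h2 : a ≤ n - 2) (ha : a < n) (ha1 : a + 1 < n),
      ∑ b, lF n ⟨a, ha⟩ b = 1 := by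
    intro a h1 h2 ha ha1
    rw [← re_empty (n := n)]
    rw [rowL_mid hn a h1 h2 ha ha1]; simp
  have hrowlast : ∑ b, lF n ⟨n - 1, h1n⟩ b = 0 := by
    rw [← re_empty (n := n)]; exact rowL_last hn h1n
  -- incoming sums of pF
  have hin0 : ∑ i, pF n ε i ⟨0, h0⟩ = 0 := colg_zero hn hz h0
  have hinmid : ∀ a (h1 : 1 ≤ a) (h2 : a ≤ n - 2) (ha : a < n),
      ∑ i, pF n ε i ⟨a, ha⟩ = ε ^ a / 2 := by
    intro a h1 h2 ha
    obtain ⟨b, rfl⟩ : ∃ b, a = b + 1 := ⟨a - 1, by omega⟩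
    have hb : b < n := by omega
    rw [colg_succ hn hz b (by omega) hb ha]
    rcases Nat.eq_zero_or_pos b with hb0 | hbpos
    · subst hb0; rw [pF_01 hn hb ha, pow_one]
    · rw [pF_mid hn b hbpos (by omega) hb ha]
  have hεpow : ∀ a : ℕ, 1 ≤ a → ε ^ a / 2 < 1 := by
    intro a ha
    have : ε ^ a < 1 := pow_lt_one₀ hε₀.le hε₁ (by omega)
    linarith
  refine ⟨pF_nonneg hn hε₀, ?_, ?_, ?_⟩
  · -- pF ≤ lF
    intro i j
    by_cases hsupp : ((j : ℕ) = (i : ℕ) + 1) ∨ ((i : ℕ) = 0 ∧ (j : ℕ) = n - 1)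
    · rw [lF_one hsupp]
      unfold pF; split
      · linarith
      · split
        · have := hεpow ((i : ℕ) + 1) (by omega)
          linarith
        · norm_num
    · rw [pF_zero hn hsupp, lF_zero hsupp]
  · -- solvent banks: only bank n-1, which pays nothing
    rintro ⟨iv, hiv⟩ hsolv j
    rcases Nat.lt_or_ge iv (n - 1) with hlt | hge
    · exfalso
      rcases Nat.eq_zero_or_pos iv with h0' | hpos
      · subst h0'
        rw [hrow0, hin0, eF_zero] at hsolv
        norm_num at hsolv
      · rw [hrowmid iv hpos (by omega) hiv (by omega),
          hinmid iv hpos (by omega) hiv, eF_pos iv hpos hiv] at hsolv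
        have := hεpow iv hpos
        linarith
    · have hivn : iv = n - 1 := by omega
      subst hivn
      have hj := j.isLt
      rw [lF_zero (by simp; omega), pF_zero hn (by simp; omega)]
  · -- defaulting banks
    rintro ⟨iv, hiv⟩ hdef j
    rcases Nat.lt_or_ge iv (n - 1) with hlt | hge
    · rcases Nat.eq_zero_or_pos iv with h0' | hpos
      · subst h0'
        rw [hrow0, hin0, eF_zero]
        by_cases hsupp : ((j : ℕ) = 1) ∨ ((j : ℕ) = n - 1)
        · have hl1 : lF n ⟨0, hiv⟩ j = 1 := lF_one (by simp; omega)
          have hp : pF n ε ⟨0, hiv⟩ j = ε / 2 := by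
            unfold pF; rw [if_pos ⟨rfl, hsupp⟩]
          rw [hl1, hp]; ring
        · rw [pF_zero hn (by simp; omega), lF_zero (by simp; omega)]
          ring
      · rw [hrowmid iv hpos (by omega) hiv (by omega),
          hinmid iv hpos (by omega) hiv, eF_pos iv hpos hiv]
        by_cases hsupp : (j : ℕ) = iv + 1
        · have hl1 : lF n ⟨iv, hiv⟩ j = 1 := lF_one (by simp; omega)
          have hjeq : j = ⟨iv + 1, by omega⟩ := Fin.ext hsupp
          rw [hjeq] at hl1 ⊢
          rw [hl1, pF_mid hn iv hpos (by omega) hiv (by omega), pow_succ]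
          ring
        · rw [pF_zero hn (by simp; omega), lF_zero (by simp; omega)]
          ring
    · exfalso
      have hivn : iv = n - 1 := by omega
      subst hivn
      rw [hrowlast] at hdef
      have h1 : 0 ≤ eF n ⟨n - 1, hiv⟩ := by unfold eF; split <;> norm_num
      have h2 : 0 ≤ ∑ i, pF n ε i ⟨n - 1, hiv⟩ :=
        Finset.sum_nonneg fun i _ => pF_nonneg hn hε₀ i _
      linarith

/-- the clearing matrix of the full network is unique -/
lemma clearing_unique (hn : 3 ≤ n) (hε₀ : 0 < ε) (hε₁ : ε < 1)
    (hq : IsClearing ε ε (eF n) (lF n) q) : q = pF n ε := by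
  have h0 : (0:ℕ) < n := by omega
  have hone : (1:ℕ) < n := by omega
  have h1n : n - 1 < n := by omega
  rw [← re_empty (n := n)] at hq
  have hb0 := bank0 hn hε₀ hε₁ h0 hone h1n (by simp) (by simp) hq
  have hbs := bank_step hn hε₀ hε₁ (fun j _ => rfl) h0 h1n (by simp) hq
  funext i j
  by_cases hsupp : ((j : ℕ) = (i : ℕ) + 1) ∨ ((i : ℕ) = 0 ∧ (j : ℕ) = n - 1)
  · rcases i with ⟨iv, hiv⟩
    rcases j with ⟨jv, hjv⟩
    simp only [Fin.val_mk] at hsupp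
    rcases hsupp with hsucc | ⟨hi0, hjn⟩
    · subst hsucc
      rcases Nat.eq_zero_or_pos iv with h0' | hpos
      · subst h0'
        rw [pF_01 hn hiv hjv]
        exact hb0.1
      · have ha' : iv - 1 + 1 < n := by omega
        have ha1' : iv - 1 + 2 < n := by omega
        have hstep := hbs (iv - 1) (by omega) ha' ha1'
        rw [if_neg (by simp)] at hstep
        have hexp : iv - 1 + 2 = iv + 1 := by omega
        have e1 : (⟨iv - 1 + 1, ha'⟩ : Fin n) = ⟨iv, hiv⟩ := fmk _ _ (by omega)
        have e2 : (⟨iv - 1 + 2, ha1'⟩ : Fin n) = ⟨iv + 1, hjv⟩ := fmk _ _ hexp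
        rw [e1, e2, hexp] at hstep
        rw [hstep, pF_mid hn iv hpos (by omega) hiv hjv]
    · subst hi0
      have hjeq : jv = n - 1 := hjn
      subst hjeq
      rw [pF_0last hn hiv hjv]
      exact hb0.2
  · rw [q_zero' hq hsupp, pF_zero hn hsupp]

end Full
section Chain
variable {ε : ℝ}

lemma lC_eval (i j : Fin n) : lC n i j = if (j : ℕ) = (i : ℕ) + 1 then 1 else 0 := rfl

lemma lC_nonneg (i j : Fin n) : 0 ≤ lC n i j := by rw [lC_eval]; split <;> norm_num

lemma re_sstar (hn : 3 ≤ n) (h0 : (0:ℕ) < n) :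
    removeEdges (lF n) (fun j : Fin n =>
      if (j : ℕ) = n - 1 then ({⟨0, h0⟩} : Finset (Fin n)) else ∅) = lC n := by
  funext i j
  by_cases hj : (j : ℕ) = n - 1
  · have hsj : (if (j : ℕ) = n - 1 then ({⟨0, h0⟩} : Finset (Fin n)) else ∅) = {⟨0, h0⟩} :=
      if_pos hj
    rw [re_eval, hsj, lC_eval]
    by_cases hi : i = ⟨0, h0⟩
    · rw [if_pos (Finset.mem_singleton.mpr hi),
        if_neg (by rw [hi]; simp only [Fin.val_mk]; omega)]
    · have hiv : (i : ℕ) ≠ 0 := fun hv => hi (Fin.ext hv)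
      rw [if_neg (fun hm => hi (Finset.mem_singleton.mp hm)), lF_eval]
      by_cases hs : (j : ℕ) = (i : ℕ) + 1
      · rw [if_pos (Or.inl hs), if_pos hs]
      · rw [if_neg (by rintro (h | ⟨h1, h2⟩); exact hs h; exact hiv h1), if_neg hs]
  · have hsj : (if (j : ℕ) = n - 1 then ({⟨0, h0⟩} : Finset (Fin n)) else ∅) = ∅ :=
      if_neg hj
    rw [re_eval, hsj, lC_eval, if_neg (Finset.notMem_empty i), lF_eval]
    by_cases hs : (j : ℕ) = (i : ℕ) + 1
    · rw [if_pos (Or.inl hs), if_pos hs]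
    · rw [if_neg (by rintro (h | ⟨h1, h2⟩); exact hs h; exact hj h2), if_neg hs]

lemma lC_row (hn : 3 ≤ n) (i : Fin n) :
    ∑ b, lC n i b = if (i : ℕ) + 1 < n then 1 else 0 := by
  by_cases hi : (i : ℕ) + 1 < n
  · rw [if_pos hi, Fintype.sum_eq_single (⟨(i : ℕ) + 1, hi⟩ : Fin n)
      (by
        intro x hx
        have hxv : (x : ℕ) ≠ (i : ℕ) + 1 := fun hv => hx (Fin.ext hv)
        rw [lC_eval, if_neg hxv]),
      lC_eval, if_pos (by simp only [Fin.val_mk])]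
  · rw [if_neg hi]
    apply Finset.sum_eq_zero
    intro b _
    have := b.isLt
    rw [lC_eval, if_neg (by omega)]

lemma lC_col (hn : 3 ≤ n) (j : Fin n) :
    ∑ i, lC n i j = if 1 ≤ (j : ℕ) then 1 else 0 := by
  by_cases hj : 1 ≤ (j : ℕ)
  · have hj' : (j : ℕ) - 1 < n := by have := j.isLt; omega
    rw [if_pos hj, Fintype.sum_eq_single (⟨(j : ℕ) - 1, hj'⟩ : Fin n)
      (by
        intro x hx
        have hxv : (x : ℕ) ≠ (j : ℕ) - 1 := fun hv => hx (Fin.ext hv)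
        rw [lC_eval, if_neg (by omega)]),
      lC_eval, if_pos (by simp only [Fin.val_mk]; omega)]
  · rw [if_neg hj]
    apply Finset.sum_eq_zero
    intro b _
    rw [lC_eval, if_neg (by omega)]

lemma lC_clearing (hn : 3 ≤ n) (hε₀ : 0 < ε) (hε₁ : ε < 1) :
    IsClearing ε ε (eF n) (lC n) (lC n) := by
  have key : ∀ i : Fin n, ∑ b, lC n i b ≤ eF n i + ∑ b, lC n b i := by
    intro i
    rw [lC_row hn i, lC_col hn i]
    unfold eF
    rcases Nat.eq_zero_or_pos (i : ℕ) with h0 | hpos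
    · rw [if_pos h0, if_neg (show ¬ 1 ≤ (i : ℕ) by omega)]
      split <;> norm_num
    · rw [if_neg (show ¬ (i : ℕ) = 0 by omega), if_pos (show 1 ≤ (i : ℕ) by omega)]
      split <;> norm_num
  refine ⟨lC_nonneg, fun i j => le_refl _, fun i _ j => rfl, fun i hdef => ?_⟩
  exact absurd (key i) (not_le.mpr hdef)

lemma lC_assets (hn : 3 ≤ n) (j : Fin n) : eF n j + ∑ i, lC n i j = 1 := by
  rw [lC_col hn j]
  unfold eF
  rcases Nat.eq_zero_or_pos (j : ℕ) with h0 | hpos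
  · rw [if_pos h0, if_neg (show ¬ 1 ≤ (j : ℕ) by omega)]; norm_num
  · rw [if_neg (show ¬ (j : ℕ) = 0 by omega), if_pos (show 1 ≤ (j : ℕ) by omega)]; norm_num

lemma lC_liquidity (hn : 3 ≤ n) : ∑ i, ∑ j, lC n i j = (n : ℝ) - 1 := by
  have h : ∀ i : Fin n, ∑ j, lC n i j = if (i : ℕ) + 1 < n then 1 else 0 := lC_row hn
  rw [Finset.sum_congr rfl fun i _ => h i]
  rw [Fin.sum_univ_eq_sum_range (fun i => if i + 1 < n then (1:ℝ) else 0) n]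
  obtain ⟨m, rfl⟩ : ∃ m, n = m + 1 := ⟨n - 1, by omega⟩
  rw [Finset.sum_range_succ, if_neg (by omega)]
  rw [Finset.sum_congr rfl (fun i hi => if_pos (by
    have := Finset.mem_range.mp hi; omega))]
  rw [Finset.sum_const, Finset.card_range]
  push_cast
  ring

end Chain
section Liquidity
variable {ε : ℝ} {s : Fin n → Finset (Fin n)} {q : Fin n → Fin n → ℝ}

lemma pF_liquidity (hn : 3 ≤ n) (hε₀ : 0 < ε) :
    ∑ i, ∑ j, pF n ε i j = ε / 2 + ∑ i ∈ Finset.Icc 1 (n - 1), ε ^ i / 2 := by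
  have h0 : (0:ℕ) < n := by omega
  have hone : (1:ℕ) < n := by omega
  have h1n : n - 1 < n := by omega
  set r : ℕ → ℝ := fun a => if a = 0 then ε else if a + 1 ≤ n - 1 then ε ^ (a + 1) / 2 else 0
    with hr
  have hrow : ∀ i : Fin n, ∑ j, pF n ε i j = r (i : ℕ) := by
    rintro ⟨iv, hiv⟩
    rcases Nat.eq_zero_or_pos iv with h0' | hpos
    · subst h0'
      rw [Fintype.sum_eq_add (⟨1, hone⟩ : Fin n) (⟨n - 1, h1n⟩ : Fin n)
        (by intro h; have := congrArg Fin.val h; simp only [Fin.val_mk] at this; omega)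
        (by
          intro x ⟨hx0, hx2⟩
          have hxv0 : (x : ℕ) ≠ 1 := fun hv => hx0 (Fin.ext hv)
          have hxv2 : (x : ℕ) ≠ n - 1 := fun hv => hx2 (Fin.ext hv)
          exact pF_zero hn (by simp only [Fin.val_mk]; omega))]
      rw [pF_01 hn hiv hone, pF_0last hn hiv h1n]
      have : r 0 = ε := by simp [hr]
      simp only [Fin.val_mk]
      rw [this]
      ring
    · rcases Nat.lt_or_ge iv (n - 1) with hlt | hge
      · have hiv1 : iv + 1 < n := by omega
        rw [Fintype.sum_eq_single (⟨iv + 1, hiv1⟩ : Fin n)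
          (by
            intro x hx
            have hxv : (x : ℕ) ≠ iv + 1 := fun hv => hx (Fin.ext hv)
            exact pF_zero hn (by simp only [Fin.val_mk]; omega))]
        rw [pF_mid hn iv hpos (by omega) hiv hiv1, hr]
        simp only [Fin.val_mk]
        rw [if_neg (by omega), if_pos (by omega)]
      · have hivn : iv = n - 1 := by omega
        rw [Finset.sum_eq_zero (fun b _ => by
          have := b.isLt
          exact pF_zero hn (by simp only [Fin.val_mk]; omega))]
        rw [hr]
        simp only [Fin.val_mk]
        rw [if_neg (by omega), if_neg (by omega)]
  rw [Finset.sum_congr rfl fun i _ => hrow i, Fin.sum_univ_eq_sum_range r n]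
  obtain ⟨k, rfl⟩ : ∃ k, n = k + 2 := ⟨n - 2, by omega⟩
  have hk : 1 ≤ k := by omega
  -- LHS
  rw [Finset.sum_range_succ, Finset.sum_range_succ']
  have hrtop : r (k + 1) = 0 := by
    simp only [hr]
    rw [if_neg (by omega), if_neg (by omega)]
  have hr0 : r 0 = ε := by simp [hr]
  have hrmid : ∀ i ∈ Finset.range k, r (i + 1) = ε ^ (i + 2) / 2 := by
    intro i hi
    have := Finset.mem_range.mp hi
    simp only [hr]
    rw [if_neg (by omega), if_pos (by omega)]
  rw [Finset.sum_congr rfl hrmid, hrtop, hr0]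
  -- RHS
  have hIcc : Finset.Icc 1 (k + 2 - 1) = Finset.Ico 1 (k + 2) := by
    rw [← Finset.Ico_add_one_right_eq_Icc]
    congr 1
  rw [hIcc, Finset.sum_Ico_eq_sum_range]
  have hrange : k + 2 - 1 = k + 1 := by omega
  rw [hrange, Finset.sum_range_succ']
  have hcongr : ∑ i ∈ Finset.range k, ε ^ (1 + (i + 1)) / 2
      = ∑ i ∈ Finset.range k, ε ^ (i + 2) / 2 :=
    Finset.sum_congr rfl (fun i _ => by rw [show 1 + (i + 1) = i + 2 from by omega])
  rw [hcongr]
  norm_num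
  ring

lemma pF_liquidity_lt (hn : 3 ≤ n) (hε₀ : 0 < ε) (hε₁ : ε < 1) :
    ε / 2 + ∑ i ∈ Finset.Icc 1 (n - 1), ε ^ i / 2 < ε / (1 - ε) := by
  have h1ε : 0 < 1 - ε := by linarith
  have hne : ε ≠ 1 := ne_of_lt hε₁
  have hIcc : Finset.Icc 1 (n - 1) = Finset.Ico 1 n := by
    rw [← Finset.Ico_add_one_right_eq_Icc]
    congr 1
    omega
  have hsum : ∑ i ∈ Finset.Icc 1 (n - 1), ε ^ i ≤ ε / (1 - ε) := by
    rw [hIcc, Finset.sum_Ico_eq_sum_range]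
    have : ∀ i ∈ Finset.range (n - 1), ε ^ (1 + i) = ε * ε ^ i := by
      intro i _; rw [pow_add, pow_one]
    rw [Finset.sum_congr rfl this, ← Finset.mul_sum, geom_sum_eq hne]
    have hgeom : (ε ^ (n - 1) - 1) / (ε - 1) ≤ 1 / (1 - ε) := by
      rw [← neg_div_neg_eq, neg_sub, neg_sub, div_le_div_iff₀ h1ε h1ε]
      nlinarith [pow_nonneg hε₀.le (n - 1)]
    calc ε * ((ε ^ (n - 1) - 1) / (ε - 1)) ≤ ε * (1 / (1 - ε)) :=
      mul_le_mul_of_nonneg_left hgeom hε₀.le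
    _ = ε / (1 - ε) := by ring
  have hhalf : ∑ i ∈ Finset.Icc 1 (n - 1), ε ^ i / 2
      = (∑ i ∈ Finset.Icc 1 (n - 1), ε ^ i) / 2 := by rw [Finset.sum_div]
  have hεlt : ε < ε / (1 - ε) := by
    rw [lt_div_iff₀ h1ε]
    nlinarith
  rw [hhalf]
  linarith

end Liquidity
section Assets
variable {ε : ℝ} {s : Fin n → Finset (Fin n)} {q : Fin n → Fin n → ℝ}

/-- if the chord is removed, bank n-1's assets are at most 1 -/
lemma assets_last_removed (hn : 3 ≤ n) (hε₀ : 0 < ε)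
    (h0 : (0:ℕ) < n) (h2n : n - 2 < n) (h1n : n - 1 < n)
    (hq : IsClearing ε ε (eF n) (removeEdges (lF n) s) q)
    (hc : (⟨0, h0⟩ : Fin n) ∈ s ⟨n - 1, h1n⟩) :
    eF n ⟨n - 1, h1n⟩ + ∑ i, q i ⟨n - 1, h1n⟩ ≤ 1 := by
  rw [eF_pos (n - 1) (by omega) h1n, col_last hn hq h0 h2n h1n, q_mem_zero hq hc]
  have h1 : q ⟨n - 2, h2n⟩ ⟨n - 1, h1n⟩ ≤ 1 := by
    refine (q_le_lF hq _ _).trans ?_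
    rw [lF_one (by simp only [Fin.val_mk]; omega)]
  linarith

/-- if both incoming edges are removed, bank n-1's assets are 0 -/
lemma assets_last_both (hn : 3 ≤ n) (hε₀ : 0 < ε)
    (h0 : (0:ℕ) < n) (h2n : n - 2 < n) (h1n : n - 1 < n)
    (hq : IsClearing ε ε (eF n) (removeEdges (lF n) s) q)
    (hc : (⟨0, h0⟩ : Fin n) ∈ s ⟨n - 1, h1n⟩)
    (hc2 : (⟨n - 2, h2n⟩ : Fin n) ∈ s ⟨n - 1, h1n⟩) :
    eF n ⟨n - 1, h1n⟩ + ∑ i, q i ⟨n - 1, h1n⟩ = 0 := by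
  rw [eF_pos (n - 1) (by omega) h1n, col_last hn hq h0 h2n h1n, q_mem_zero hq hc,
    q_mem_zero hq hc2]
  ring

/-- if the chord is present and all other banks keep their edges, bank n-1's assets
are strictly below 1 -/
lemma assets_last_chord (hn : 3 ≤ n) (hε₀ : 0 < ε) (hε₁ : ε < 1)
    (h0 : (0:ℕ) < n) (h2n : n - 2 < n) (h1n : n - 1 < n)
    (hs : ∀ k : Fin n, (k : ℕ) ≠ n - 1 → s k = ∅)
    (hc : (⟨0, h0⟩ : Fin n) ∉ s ⟨n - 1, h1n⟩)
    (hq : IsClearing ε ε (eF n) (removeEdges (lF n) s) q) :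
    eF n ⟨n - 1, h1n⟩ + ∑ i, q i ⟨n - 1, h1n⟩ < 1 := by
  have hone : (1:ℕ) < n := by omega
  have hs1 : (⟨0, h0⟩ : Fin n) ∉ s ⟨1, hone⟩ := by
    rw [hs ⟨1, hone⟩ (by simp only [Fin.val_mk]; omega)]; simp
  have hq0 : q ⟨0, h0⟩ ⟨n - 1, h1n⟩ = ε / 2 :=
    (bank0 hn hε₀ hε₁ h0 hone h1n hs1 hc hq).2
  have ha' : n - 3 + 1 < n := by omega
  have ha1' : n - 3 + 2 < n := by omega
  have hstep := bank_step hn hε₀ hε₁ hs h0 h1n hc hq (n - 3) (by omega) ha' ha1'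
  have e1 : (⟨n - 3 + 1, ha'⟩ : Fin n) = ⟨n - 2, h2n⟩ := fmk _ _ (by omega)
  have e2 : (⟨n - 3 + 2, ha1'⟩ : Fin n) = ⟨n - 1, h1n⟩ := fmk _ _ (by omega)
  rw [e1, e2] at hstep
  have hexp : n - 3 + 2 = n - 1 := by omega
  rw [hexp] at hstep
  have hpow : 0 ≤ ε ^ (n - 1) / 2 := by positivity
  have hub : q ⟨n - 2, h2n⟩ ⟨n - 1, h1n⟩ ≤ ε ^ (n - 1) / 2 := by
    rw [hstep]; split
    · exact hpow
    · exact le_refl _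
  have hεn : ε ^ (n - 1) < 1 := pow_lt_one₀ hε₀.le hε₁ (by omega)
  rw [eF_pos (n - 1) (by omega) h1n, col_last hn hq h0 h2n h1n, hq0]
  linarith

/-- banks other than n-1 always have assets at most 1 -/
lemma assets_nonlast (hn : 3 ≤ n) (hε₀ : 0 < ε)
    (hq : IsClearing ε ε (eF n) (removeEdges (lF n) s) q)
    (j : Fin n) (hj : (j : ℕ) ≠ n - 1) :
    eF n j + ∑ i, q i j ≤ 1 := by
  rcases j with ⟨jv, hlt⟩
  rcases Nat.eq_zero_or_pos jv with h0' | hpos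
  · subst h0'
    rw [eF_zero hlt, col_zero hn hq hlt]
    norm_num
  · have hprev : jv - 1 < n := by omega
    have hcol := col_succ hn hq (jv - 1) (by simp only [Fin.val_mk] at hj; omega) hprev
      (by omega)
    have e1 : (⟨jv - 1 + 1, by omega⟩ : Fin n) = ⟨jv, hlt⟩ := fmk _ _ (by omega)
    rw [e1] at hcol
    rw [eF_pos jv hpos hlt, hcol]
    have h1 : q ⟨jv - 1, hprev⟩ ⟨jv, hlt⟩ ≤ 1 := by
      refine (q_le_lF hq _ _).trans ?_
      rw [lF_one (by simp only [Fin.val_mk]; omega)]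
    linarith

lemma pos_cond {i j : Fin n} (h : 0 < lF n i j) :
    ((j : ℕ) = (i : ℕ) + 1) ∨ ((i : ℕ) = 0 ∧ (j : ℕ) = n - 1) := by
  by_contra hc
  rw [lF_zero hc] at h
  exact lt_irrefl _ h

end Assets
end EoS

/-- The network on banks v₁,…,vₙ ↦ 0,…,n-1 with `e_{v1} = 1`, liabilities
`l_{vᵢ,vᵢ₊₁} = 1` (1 ≤ i ≤ n-1) and `l_{v1,vₙ} = 1`, default costs `α = β = ε`, no cash
injections: (i) the full network has the stated maximal clearing payments and liquidity
`ε/2 + ∑_{i=1}^{n-1} εⁱ/2 < ε/(1-ε)`; (ii) the profile in which vₙ removes the edge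
(v₁,vₙ) and all other edges are kept is the unique pure Nash equilibrium (among profiles
removing only existing edges) and has liquidity `n-1`.  Hence the Effect of Stability is
less than `ε/((1-ε)(n-1))`, i.e. arbitrarily close to 0. -/
theorem default_costs_effect_of_stability
    (n : ℕ) (hn : 3 ≤ n) (ε : ℝ) (hε₀ : 0 < ε) (hε₁ : ε < 1)
    (e : Fin n → ℝ) (he : e = fun (i : Fin n) => if (i : ℕ) = 0 then 1 else 0)
    (l : Fin n → Fin n → ℝ)
    (hl : l = fun (a b : Fin n) =>
      if ((b : ℕ) = (a : ℕ) + 1) ∨ ((a : ℕ) = 0 ∧ (b : ℕ) = n - 1) then 1 else 0)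
    (p₁ : Fin n → Fin n → ℝ)
    (hp₁ : p₁ = fun (a b : Fin n) =>
      if (a : ℕ) = 0 ∧ ((b : ℕ) = 1 ∨ (b : ℕ) = n - 1) then ε / 2
      else if (b : ℕ) = (a : ℕ) + 1 ∧ 1 ≤ (a : ℕ) then ε ^ ((a : ℕ) + 1) / 2 else 0)
    (sstar : Fin n → Finset (Fin n))
    (hsstar : sstar = fun (j : Fin n) => if (j : ℕ) = n - 1 then {(⟨0, by omega⟩ : Fin n)} else ∅)
    (Pay : (Fin n → Finset (Fin n)) → Fin n → Fin n → ℝ)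
    (hPay : ∀ s, IsMaxClearing ε ε e (removeEdges l s) (Pay s)) :
    -- (i) maximal clearing payments and liquidity of the full network
    (IsMaxClearing ε ε e l p₁ ∧
      liquidity p₁ = ε / 2 + ∑ i ∈ Finset.Icc 1 (n - 1), ε ^ i / 2 ∧
      liquidity p₁ < ε / (1 - ε))
    -- (ii) sstar is the unique pure Nash equilibrium, with liquidity n-1
    ∧ NashEq e Pay sstar
    ∧ (∀ s : Fin n → Finset (Fin n), (∀ j, ∀ i ∈ s j, 0 < l i j) →
        NashEq e Pay s → s = sstar)
    ∧ liquidity (Pay sstar) = (n : ℝ) - 1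
    -- consequently, the Effect of Stability on this instance is below ε/((1-ε)(n-1))
    ∧ liquidity p₁ / liquidity (Pay sstar) < ε / ((1 - ε) * ((n : ℝ) - 1)) := by
  have h0 : (0:ℕ) < n := by omega
  have hone : (1:ℕ) < n := by omega
  have h2n : n - 2 < n := by omega
  have h1n : n - 1 < n := by omega
  have hE : e = EoS.eF n := he
  have hLf : l = EoS.lF n := hl
  have hPf : p₁ = EoS.pF n ε := hp₁
  have hSS : sstar = fun j : Fin n =>
      if (j : ℕ) = n - 1 then ({⟨0, h0⟩} : Finset (Fin n)) else ∅ := hsstar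
  subst hE; subst hLf; subst hPf
  -- payments under sstar
  have hre : removeEdges (EoS.lF n) sstar = EoS.lC n := by
    rw [hSS]; exact EoS.re_sstar hn h0
  have hmaxs := hPay sstar
  rw [hre] at hmaxs
  have hPs : Pay sstar = EoS.lC n := by
    funext i j
    exact le_antisymm (hmaxs.1.2.1 i j) (hmaxs.2 _ (EoS.lC_clearing hn hε₀ hε₁) i j)
  have hliq_s : liquidity (Pay sstar) = (n:ℝ) - 1 := by
    rw [hPs]; unfold liquidity; exact EoS.lC_liquidity hn
  have hliq_p : liquidity (EoS.pF n ε) = ε / 2 + ∑ i ∈ Finset.Icc 1 (n - 1), ε ^ i / 2 := by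
    unfold liquidity; exact EoS.pF_liquidity hn hε₀
  -- Nash equilibrium property of sstar
  have hnash : NashEq (EoS.eF n) Pay sstar := by
    intro j R
    have hRHS : assets (EoS.eF n) (Pay sstar) j = 1 := by
      unfold assets; rw [hPs]; exact EoS.lC_assets hn j
    rw [hRHS]
    have hq' := (hPay (Function.update sstar j R)).1
    by_cases hj : (j : ℕ) = n - 1
    · have hjf : j = ⟨n - 1, h1n⟩ := Fin.ext hj
      have hsk : ∀ k : Fin n, (k : ℕ) ≠ n - 1 →
          Function.update sstar j R k = ∅ := by
        intro k hk
        rw [Function.update_of_ne (fun h => hk (by rw [h]; exact hj)), hSS]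
        exact if_neg hk
      subst hjf
      unfold assets
      by_cases hc : (⟨0, h0⟩ : Fin n) ∈ Function.update sstar ⟨n - 1, h1n⟩ R ⟨n - 1, h1n⟩
      · exact EoS.assets_last_removed hn hε₀ h0 h2n h1n hq' hc
      · exact le_of_lt (EoS.assets_last_chord hn hε₀ hε₁ h0 h2n h1n hsk hc hq')
    · unfold assets
      exact EoS.assets_nonlast hn hε₀ hq' j hj
  -- uniqueness of the Nash equilibrium
  have huniq : ∀ s : Fin n → Finset (Fin n), (∀ j, ∀ i ∈ s j, 0 < EoS.lF n i j) →
      NashEq (EoS.eF n) Pay s → s = sstar := by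
    intro s hpos' hNash
    have hmid : ∀ a : ℕ, a ≤ n - 2 → 1 ≤ a → ∀ (ha : a < n), s ⟨a, ha⟩ = ∅ := by
      intro a
      induction a using Nat.strong_induction_on with
      | _ a IH =>
        intro h2 h1 ha
        by_contra hne
        obtain ⟨i, hi⟩ := Finset.nonempty_iff_ne_empty.mpr hne
        have hcond := EoS.pos_cond (hpos' ⟨a, ha⟩ i hi)
        simp only [Fin.val_mk] at hcond
        have hiv : (i : ℕ) + 1 = a := by
          have := i.isLt
          rcases hcond with h | ⟨h1', h2'⟩ <;> omega
        have hq := (hPay s).1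
        have hzero : ∑ x, Pay s x ⟨a, ha⟩ = 0 := by
          apply Finset.sum_eq_zero
          intro x _
          by_cases hx : (a : ℕ) = (x : ℕ) + 1
          · have hxi : x = i := Fin.ext (by omega)
            exact EoS.q_mem_zero hq (hxi ▸ hi)
          · exact EoS.q_zero' hq (by simp only [Fin.val_mk]; omega)
        set s2 := Function.update s ⟨a, ha⟩ ∅ with hs2
        have hq2 := (hPay s2).1
        have hpre : ∀ b : ℕ, 1 ≤ b → b ≤ a → ∀ (hb : b < n), s2 ⟨b, hb⟩ = ∅ := by
          intro b hb1 hb2 hb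
          by_cases hba : b = a
          · subst hba
            exact Function.update_self _ _ _
          · rw [hs2, Function.update_of_ne
              (fun h => hba (by simpa using congrArg Fin.val h))]
            exact IH b (by omega) (by omega) hb1 hb
        have ha' : a - 1 < n := by omega
        have ha1' : a - 1 + 1 < n := by omega
        have hlb := EoS.chain_lb hn hε₀ hε₁ a (by omega) hpre hq2 (a - 1) (by omega) ha' ha1'
        have e1 : (⟨a - 1 + 1, ha1'⟩ : Fin n) = ⟨a, ha⟩ := EoS.fmk _ _ (by omega)
        have hexp : a - 1 + 1 = a := by omega
        rw [e1, hexp] at hlb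
        have hsingle : Pay s2 ⟨a - 1, ha'⟩ ⟨a, ha⟩ ≤ ∑ x, Pay s2 x ⟨a, ha⟩ :=
          Finset.single_le_sum (fun x _ => hq2.1 x ⟨a, ha⟩) (Finset.mem_univ _)
        have hN := hNash ⟨a, ha⟩ ∅
        unfold assets at hN
        rw [hzero, EoS.eF_pos a h1 ha] at hN
        have hε' : 0 < ε ^ a / 2 := by positivity
        rw [← hs2] at hN
        linarith [hlb.trans hsingle]
    have hsall : ∀ k : Fin n, (k : ℕ) ≠ n - 1 → s k = ∅ := by
      intro k hk
      rcases Nat.eq_zero_or_pos (k : ℕ) with hk0 | hkpos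
      · rw [Finset.eq_empty_iff_forall_notMem]
        intro i hi
        have hcond := EoS.pos_cond (hpos' k i hi)
        omega
      · rcases k with ⟨kv, hklt⟩
        simp only [Fin.val_mk] at hk hkpos
        exact hmid kv (by omega) hkpos hklt
    have hupd : Function.update s ⟨n - 1, h1n⟩ ({⟨0, h0⟩} : Finset (Fin n)) = sstar := by
      funext k
      by_cases hk : k = ⟨n - 1, h1n⟩
      · rw [hk, Function.update_self, hSS]
        simp
      · have hkv : (k : ℕ) ≠ n - 1 := fun hv => hk (Fin.ext hv)
        rw [Function.update_of_ne hk, hSS]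
        simp only []
        rw [if_neg hkv]
        exact hsall k hkv
    have hdev := hNash ⟨n - 1, h1n⟩ ({⟨0, h0⟩} : Finset (Fin n))
    rw [hupd] at hdev
    unfold assets at hdev
    have h1' : EoS.eF n ⟨n - 1, h1n⟩ + ∑ x, Pay sstar x ⟨n - 1, h1n⟩ = 1 := by
      rw [hPs]; exact EoS.lC_assets hn _
    rw [h1'] at hdev
    have hq := (hPay s).1
    by_cases hc : (⟨0, h0⟩ : Fin n) ∈ s ⟨n - 1, h1n⟩
    · by_cases hc2 : (⟨n - 2, h2n⟩ : Fin n) ∈ s ⟨n - 1, h1n⟩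
      · exfalso
        have := EoS.assets_last_both hn hε₀ h0 h2n h1n hq hc hc2
        linarith
      · have hset : s ⟨n - 1, h1n⟩ = {⟨0, h0⟩} := by
          apply Finset.Subset.antisymm
          · intro i hi
            have hcond := EoS.pos_cond (hpos' _ i hi)
            simp only [Fin.val_mk] at hcond
            rcases hcond with h | ⟨hi0, _⟩
            · exfalso
              have hieq : i = ⟨n - 2, h2n⟩ := Fin.ext (by simp only [Fin.val_mk]; omega)
              exact hc2 (hieq ▸ hi)
            · rw [Finset.mem_singleton]
              exact Fin.ext hi0
          · intro i hi
            rw [Finset.mem_singleton] at hi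
            subst hi
            exact hc
        funext k
        by_cases hk : k = ⟨n - 1, h1n⟩
        · rw [hk, hset, hSS]
          simp
        · have hkv : (k : ℕ) ≠ n - 1 := fun hv => hk (Fin.ext hv)
          rw [hSS]
          simp only []
          rw [if_neg hkv]
          exact hsall k hkv
    · exfalso
      have := EoS.assets_last_chord hn hε₀ hε₁ h0 h2n h1n hsall hc hq
      linarith
  refine ⟨⟨⟨EoS.pF_clearing hn hε₀ hε₁, fun q hq i j =>
      le_of_eq (congrFun (congrFun (EoS.clearing_unique hn hε₀ hε₁ hq) i) j)⟩,
      hliq_p, ?_⟩, hnash, huniq, hliq_s, ?_⟩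
  · rw [hliq_p]; exact EoS.pF_liquidity_lt hn hε₀ hε₁
  · rw [hliq_s, hliq_p]
    have hn3 : (3:ℝ) ≤ (n:ℝ) := by exact_mod_cast hn
    have hpos : 0 < (n:ℝ) - 1 := by linarith
    rw [show ε / ((1 - ε) * ((n:ℝ) - 1)) = (ε / (1 - ε)) / ((n:ℝ) - 1) from by
      rw [div_div]]
    exact div_lt_div_of_pos_right (EoS.pF_liquidity_lt hn hε₀ hε₁) hpos
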